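/- Positivity and asymptotic stability of the frozen system (Proposition 3). Assume k_i > 0 for all i. Then for every continuously differentiable function V : [0,∞) → ℝⁿ satisfying V̇_i(t) = V_i(t) (Ψ V(t))_i for all i and t ≥ 0, with V(0) ∈ ℝⁿ₊: (a) V(t) ∈ ℝⁿ₊ for all t ≥ 0; (b) the function t ↦ Σ_i V_i(t) is nonincreasing; and (c) V(t) → 0 as t → ∞. -/

import Mathlib

open Finset Matrix Filter

private lemma swap_sum' {n : ℕ} (f : Fin n → Fin n → ℝ) :
    ∑ i, ∑ j ∈ Finset.univ.erase i, f i j = ∑ i, ∑ j ∈ Finset.univ.erase i, f j i := by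
  rw [Finset.sum_comm' (t' := Finset.univ) (s' := fun j => Finset.univ.erase j)
    (fun x y => by simp [Finset.mem_erase, ne_comm])]

private lemma quad_bound {n : ℕ} (Ψ : Matrix (Fin n) (Fin n) ℝ)
    (C : Fin n → Fin n → ℝ) (k v : Fin n → ℝ)
    (hCsymm : ∀ i j, C i j = C j i) (hC0 : ∀ i j, 0 ≤ C i j)
    (hoff : ∀ i j, i ≠ j → Ψ i j + Ψ j i ≤ 2 * C i j)
    (hdiag : ∀ i, Ψ i i ≤ -((∑ j ∈ Finset.univ.erase i, C i j) + k i))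
    (hv : ∀ i, 0 ≤ v i) :
    ∑ i, v i * Ψ.mulVec v i ≤ -∑ i, k i * v i ^ 2 := by
  have expand : ∑ i, v i * Ψ.mulVec v i
      = (∑ i, Ψ i i * v i ^ 2) + ∑ i, ∑ j ∈ Finset.univ.erase i, v i * (Ψ i j * v j) := by
    rw [← Finset.sum_add_distrib]
    refine Finset.sum_congr rfl fun i _ => ?_
    calc v i * Ψ.mulVec v i = ∑ j, v i * (Ψ i j * v j) := by
          simp [Matrix.mulVec, dotProduct, Finset.mul_sum]
      _ = (∑ j ∈ Finset.univ.erase i, v i * (Ψ i j * v j)) + v i * (Ψ i i * v i) :=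
          (Finset.sum_erase_add _ _ (Finset.mem_univ i)).symm
      _ = Ψ i i * v i ^ 2 + ∑ j ∈ Finset.univ.erase i, v i * (Ψ i j * v j) := by ring
  have hD2 : 2 * (∑ i, ∑ j ∈ Finset.univ.erase i, v i * (Ψ i j * v j))
      = ∑ i, ∑ j ∈ Finset.univ.erase i,
      (v i * (Ψ i j * v j) + v j * (Ψ j i * v i)) := by
    rw [two_mul]
    nth_rewrite 2 [swap_sum' (fun i j => v i * (Ψ i j * v j))]
    rw [← Finset.sum_add_distrib]
    exact Finset.sum_congr rfl fun i _ => (Finset.sum_add_distrib).symm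
  have hterm : ∀ i : Fin n, ∀ j ∈ Finset.univ.erase i,
      v i * (Ψ i j * v j) + v j * (Ψ j i * v i) ≤ C i j * (v i ^ 2 + v j ^ 2) := by
    intro i j hj
    have hij : i ≠ j := fun h => (Finset.mem_erase.1 hj).1 h.symm
    have h1 : v i * (Ψ i j * v j) + v j * (Ψ j i * v i) = (v i * v j) * (Ψ i j + Ψ j i) := by ring
    rw [h1]
    calc (v i * v j) * (Ψ i j + Ψ j i) ≤ (v i * v j) * (2 * C i j) :=
          mul_le_mul_of_nonneg_left (hoff i j hij) (mul_nonneg (hv i) (hv j))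
      _ = C i j * (2 * v i * v j) := by ring
      _ ≤ C i j * (v i ^ 2 + v j ^ 2) := by
          have := two_mul_le_add_sq (v i) (v j)
          exact mul_le_mul_of_nonneg_left this (hC0 i j)
  have hswapC : ∑ i, ∑ j ∈ Finset.univ.erase i, C i j * v j ^ 2
      = ∑ i, ∑ j ∈ Finset.univ.erase i, C i j * v i ^ 2 := by
    rw [swap_sum' (fun i j => C i j * v j ^ 2)]
    exact Finset.sum_congr rfl fun i _ => Finset.sum_congr rfl fun j _ => by rw [hCsymm]
  have hDbound : (∑ i, ∑ j ∈ Finset.univ.erase i, v i * (Ψ i j * v j))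
      ≤ ∑ i, (∑ j ∈ Finset.univ.erase i, C i j) * v i ^ 2 := by
    have h2 : 2 * (∑ i, ∑ j ∈ Finset.univ.erase i, v i * (Ψ i j * v j))
        ≤ ∑ i, ∑ j ∈ Finset.univ.erase i, C i j * (v i ^ 2 + v j ^ 2) := by
      rw [hD2]
      exact Finset.sum_le_sum fun i _ => Finset.sum_le_sum (hterm i)
    have h3 : ∑ i, ∑ j ∈ Finset.univ.erase i, C i j * (v i ^ 2 + v j ^ 2)
        = 2 * ∑ i, (∑ j ∈ Finset.univ.erase i, C i j) * v i ^ 2 := by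
      have : ∀ i : Fin n, ∑ j ∈ Finset.univ.erase i, C i j * (v i ^ 2 + v j ^ 2)
          = (∑ j ∈ Finset.univ.erase i, C i j * v i ^ 2)
            + ∑ j ∈ Finset.univ.erase i, C i j * v j ^ 2 := by
        intro i
        rw [← Finset.sum_add_distrib]
        exact Finset.sum_congr rfl fun j _ => by ring
      simp only [this, Finset.sum_add_distrib, hswapC]
      rw [two_mul]
      congr 1 <;> exact Finset.sum_congr rfl fun i _ => (Finset.sum_mul _ _ _).symm
    linarith [h2, h3.symm.le]
  have final : ∑ i, Ψ i i * v i ^ 2 + ∑ i, (∑ j ∈ Finset.univ.erase i, C i j) * v i ^ 2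
      ≤ -∑ i, k i * v i ^ 2 := by
    rw [← Finset.sum_add_distrib, ← Finset.sum_neg_distrib]
    refine Finset.sum_le_sum fun i _ => ?_
    have h4 : Ψ i i * v i ^ 2 + (∑ j ∈ Finset.univ.erase i, C i j) * v i ^ 2
        = (Ψ i i + ∑ j ∈ Finset.univ.erase i, C i j) * v i ^ 2 := by ring
    rw [h4]
    have h5 : Ψ i i + ∑ j ∈ Finset.univ.erase i, C i j ≤ -k i := by
      have := hdiag i; linarith
    nlinarith [sq_nonneg (v i), h5]
  linarith [expand, hDbound, final]

/-- Positivity and asymptotic stability of the frozen system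
(Proposition 3). Solutions of `V̇ = diag(V) Ψ V` starting in the nonnegative
orthant stay in it, have nonincreasing coordinate sum, and converge to `0`. -/
theorem frozen_system_positive_and_asymptotically_stable
    (n : ℕ) (hn : 1 ≤ n)
    (B G : Fin n → Fin n → ℝ) (Bsh k : Fin n → ℝ)
    (Δc Δs : Fin n → Fin n → ℝ)
    (hBsymm : ∀ i j, B i j = B j i)
    (hBle : ∀ i j, i ≠ j → B i j ≤ 0)
    (hGsymm : ∀ i j, G i j = G j i)
    (hGge : ∀ i j, i ≠ j → 0 ≤ G i j)
    (hBsh : ∀ i, 0 ≤ Bsh i)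
    (hk : ∀ i, 0 < k i)
    (hΔc_symm : ∀ i j, Δc i j = Δc j i)
    (hΔc_mem : ∀ i j, i ≠ j → Δc i j ∈ Set.Icc (-1 : ℝ) 1)
    (hΔs_skew : ∀ i j, Δs i j = -Δs j i)
    (hΔs_mem : ∀ i j, i ≠ j → Δs i j ∈ Set.Icc (-1 : ℝ) 1)
    (Ψ : Matrix (Fin n) (Fin n) ℝ)
    (hΨdiag : ∀ i, Ψ i i = -((Bsh i + ∑ j ∈ Finset.univ.erase i, |B i j|) + k i))
    (hΨoff : ∀ i j, i ≠ j → Ψ i j = G i j * Δs i j + |B i j| * Δc i j)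
    (V : ℝ → Fin n → ℝ)
    (hC1 : ∀ i, ContDiffOn ℝ 1 (fun t => V t i) (Set.Ici 0))
    (hODE : ∀ i, ∀ t ∈ Set.Ici (0 : ℝ),
      HasDerivAt (fun s => V s i) (V t i * Ψ.mulVec (V t) i) t)
    (hV0 : ∀ i, 0 ≤ V 0 i) :
    (∀ t ∈ Set.Ici (0 : ℝ), ∀ i, 0 ≤ V t i) ∧
    (AntitoneOn (fun t => ∑ i, V t i) (Set.Ici 0)) ∧
    (Tendsto V atTop (nhds 0)) := by
  -- continuity of coordinates on [0, ∞)
  have hcont : ∀ j, ∀ s ∈ Set.Ici (0:ℝ), ContinuousAt (fun u => V u j) s :=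
    fun j s hs => (hODE j s hs).continuousAt
  have hWcont : ∀ j, Continuous fun s => V (max s 0) j := by
    intro j
    rw [continuous_iff_continuousAt]
    intro s
    have hm : Continuous (fun s : ℝ => max s 0) := continuous_id.max continuous_const
    have : ContinuousAt ((fun u => V u j) ∘ (fun s : ℝ => max s 0)) s :=
      ContinuousAt.comp (hcont j (max s 0) (le_max_right s 0)) hm.continuousAt
    exact this
  -- Part (a): positivity
  have part_a : ∀ t ∈ Set.Ici (0:ℝ), ∀ i, 0 ≤ V t i := by
    intro t ht i
    set g : ℝ → ℝ := fun s => ∑ j, Ψ i j * V (max s 0) j with hg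
    have hgcont : Continuous g := by
      apply continuous_finset_sum
      exact fun j _ => (continuous_const.mul (hWcont j))
    set Gi : ℝ → ℝ := fun u => ∫ s in (0:ℝ)..u, g s with hGi
    have hGideriv : ∀ u, HasDerivAt Gi (g u) u := fun u =>
      intervalIntegral.integral_hasDerivAt_right (hgcont.intervalIntegrable _ _)
        (hgcont.stronglyMeasurableAtFilter _ _) hgcont.continuousAt
    have hgeq : ∀ s ∈ Set.Ici (0:ℝ), g s = Ψ.mulVec (V s) i := by
      intro s hs
      simp [hg, Matrix.mulVec, dotProduct, max_eq_left (Set.mem_Ici.1 hs)]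
    set h : ℝ → ℝ := fun u => V u i * Real.exp (-(Gi u)) with hh
    have hhderiv : ∀ u ∈ Set.Ici (0:ℝ), HasDerivAt h 0 u := by
      intro u hu
      have h1 : HasDerivAt h
          (V u i * Ψ.mulVec (V u) i * Real.exp (-(Gi u))
            + V u i * (Real.exp (-(Gi u)) * -(g u))) u :=
        (hODE i u hu).mul ((hGideriv u).neg.exp)
      have h0 : V u i * Ψ.mulVec (V u) i * Real.exp (-(Gi u))
          + V u i * (Real.exp (-(Gi u)) * -(g u)) = 0 := by
        rw [hgeq u hu]; ring
      rwa [h0] at h1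
    have hconst : h t = h 0 := by
      refine constant_of_has_deriv_right_zero (f := h) (a := 0) (b := t) ?_ ?_ t ⟨ht, le_refl t⟩
      · intro x hx
        exact ((hhderiv x hx.1).continuousAt).continuousWithinAt
      · intro x hx
        exact (hhderiv x hx.1).hasDerivWithinAt
    have hh0 : h 0 = V 0 i * Real.exp (-(Gi 0)) := rfl
    have hht : 0 ≤ h t := by
      rw [hconst, hh0]
      exact mul_nonneg (hV0 i) (Real.exp_pos _).le
    exact (mul_nonneg_iff_of_pos_right (Real.exp_pos (-(Gi t)))).1 hht
  -- derivative of the sum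
  have hS' : ∀ t ∈ Set.Ici (0:ℝ), HasDerivAt (fun s => ∑ i, V s i)
      (∑ i, V t i * Ψ.mulVec (V t) i) t :=
    fun t ht => HasDerivAt.fun_sum (fun i _ => hODE i t ht)
  -- the quadratic form bound
  have hquad : ∀ t ∈ Set.Ici (0:ℝ),
      ∑ i, V t i * Ψ.mulVec (V t) i ≤ -∑ i, k i * V t i ^ 2 := by
    intro t ht
    refine quad_bound Ψ (fun i j => |B i j|) k (V t)
      (fun i j => congrArg abs (hBsymm i j)) (fun i j => abs_nonneg _) ?_ ?_ (part_a t ht)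
    · intro i j hij
      have e1 := hΨoff i j hij
      have e2 := hΨoff j i hij.symm
      have e3 : Δs j i = -Δs i j := by rw [hΔs_skew i j]; ring
      have e4 : Ψ i j + Ψ j i = 2 * (|B i j| * Δc i j) := by
        rw [e1, e2, e3, hGsymm j i, hΔc_symm j i, hBsymm j i]; ring
      have e5 : |B i j| * Δc i j ≤ |B i j| * 1 :=
        mul_le_mul_of_nonneg_left (hΔc_mem i j hij).2 (abs_nonneg _)
      rw [e4]; linarith
    · intro i
      rw [hΨdiag i]
      have := hBsh i
      linarith
  have hknonneg : ∀ t ∈ Set.Ici (0:ℝ), (0:ℝ) ≤ ∑ i, k i * V t i ^ 2 := fun t _ =>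
    Finset.sum_nonneg fun i _ => mul_nonneg (hk i).le (sq_nonneg _)
  -- Part (b): antitone sum
  have part_b : AntitoneOn (fun t => ∑ i, V t i) (Set.Ici 0) := by
    apply antitoneOn_of_deriv_nonpos (convex_Ici 0)
    · exact fun t ht => ((hS' t ht).continuousAt).continuousWithinAt
    · rw [interior_Ici]
      exact fun t ht => ((hS' t (Set.mem_Ici.2 (le_of_lt (Set.mem_Ioi.1 ht)))).differentiableAt).differentiableWithinAt
    · rw [interior_Ici]
      intro t ht
      rw [(hS' t (Set.mem_Ici.2 (le_of_lt (Set.mem_Ioi.1 ht)))).deriv]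
      have := hquad t (Set.mem_Ici.2 (le_of_lt (Set.mem_Ioi.1 ht)))
      have := hknonneg t (Set.mem_Ici.2 (le_of_lt (Set.mem_Ioi.1 ht)))
      linarith
  -- Part (c): convergence to zero
  set S : ℝ → ℝ := fun t => ∑ i, V t i with hSdef
  have hSnonneg : ∀ t ∈ Set.Ici (0:ℝ), 0 ≤ S t := fun t ht =>
    Finset.sum_nonneg fun i _ => part_a t ht i
  have hne : (Finset.univ : Finset (Fin n)).Nonempty := ⟨⟨0, hn⟩, Finset.mem_univ _⟩
  set km : ℝ := Finset.univ.inf' hne k with hkm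
  have hkmpos : 0 < km := by
    rw [hkm, Finset.lt_inf'_iff]
    exact fun i _ => hk i
  -- key: S eventually below any ε
  have hkey : ∀ ε : ℝ, 0 < ε → ∃ T, 0 ≤ T ∧ S T ≤ ε := by
    intro ε hε
    by_contra hcon
    push_neg at hcon
    have hSbig : ∀ t ∈ Set.Ici (0:ℝ), ε < S t := fun t ht => hcon t ht
    have hnpos : (0:ℝ) < n := by exact_mod_cast hn
    set c : ℝ := km * ε ^ 2 / n with hc
    have hcpos : 0 < c := div_pos (mul_pos hkmpos (pow_pos hε 2)) hnpos
    -- derivative bound: S' ≤ -c on (0,∞)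
    have hderivle : ∀ t ∈ Set.Ici (0:ℝ), ∑ i, V t i * Ψ.mulVec (V t) i ≤ -c := by
      intro t ht
      have h1 := hquad t ht
      have h2 : (S t) ^ 2 ≤ (n : ℝ) * ∑ i, V t i ^ 2 := by
        have := sq_sum_le_card_mul_sum_sq (α := ℝ) (s := (Finset.univ : Finset (Fin n))) (f := V t)
        simpa [Finset.card_univ] using this
      have h3 : ε ^ 2 ≤ (S t) ^ 2 := by
        have := hSbig t ht
        nlinarith
      have h4 : km * ∑ i, V t i ^ 2 ≤ ∑ i, k i * V t i ^ 2 := by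
        rw [Finset.mul_sum]
        refine Finset.sum_le_sum fun i _ => ?_
        exact mul_le_mul_of_nonneg_right (Finset.inf'_le _ (Finset.mem_univ i)) (sq_nonneg _)
      have h5 : c ≤ km * ∑ i, V t i ^ 2 := by
        rw [hc, div_le_iff₀ hnpos]
        nlinarith [mul_le_mul_of_nonneg_left h3 hkmpos.le,
          mul_le_mul_of_nonneg_left h2 hkmpos.le]
      linarith
    -- f t := S t + c * t is antitone on [0,∞)
    have hf' : ∀ t ∈ Set.Ici (0:ℝ), HasDerivAt (fun s => S s + c * s)
        ((∑ i, V t i * Ψ.mulVec (V t) i) + c) t := by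
      intro t ht
      have hlin : HasDerivAt (fun s : ℝ => c * s) c t := by
        simpa using (hasDerivAt_id t).const_mul c
      exact (hS' t ht).add hlin
    have hfanti : AntitoneOn (fun s => S s + c * s) (Set.Ici 0) := by
      apply antitoneOn_of_deriv_nonpos (convex_Ici 0)
      · exact fun t ht => ((hf' t ht).continuousAt).continuousWithinAt
      · rw [interior_Ici]
        exact fun t ht => ((hf' t (Set.mem_Ici.2 (le_of_lt (Set.mem_Ioi.1 ht)))).differentiableAt).differentiableWithinAt
      · rw [interior_Ici]
        intro t ht
        rw [(hf' t (Set.mem_Ici.2 (le_of_lt (Set.mem_Ioi.1 ht)))).deriv]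
        have := hderivle t (Set.mem_Ici.2 (le_of_lt (Set.mem_Ioi.1 ht)))
        linarith
    set T : ℝ := (S 0 + 1) / c with hT
    have hTpos : 0 < T := div_pos (by linarith [hSnonneg 0 Set.self_mem_Ici]) hcpos
    have hmono : S T + c * T ≤ S 0 + c * 0 :=
      hfanti (Set.self_mem_Ici) (Set.mem_Ici.2 hTpos.le) hTpos.le
    have hcT : c * T = S 0 + 1 := by
      rw [hT]; field_simp
    have hST := hSnonneg T (Set.mem_Ici.2 hTpos.le)
    linarith
  have hStend : Tendsto S atTop (nhds 0) := by
    rw [Metric.tendsto_atTop]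
    intro ε hε
    obtain ⟨T, hT0, hTle⟩ := hkey (ε/2) (by linarith)
    refine ⟨T, fun t htT => ?_⟩
    have ht0 : (0:ℝ) ≤ t := le_trans hT0 htT
    have h1 : S t ≤ S T := part_b (Set.mem_Ici.2 hT0) (Set.mem_Ici.2 ht0) htT
    have h2 : 0 ≤ S t := hSnonneg t (Set.mem_Ici.2 ht0)
    rw [Real.dist_eq, sub_zero, abs_of_nonneg h2]
    linarith
  have part_c : Tendsto V atTop (nhds 0) := by
    rw [tendsto_pi_nhds]
    intro i
    have hzero : Tendsto (fun _ : ℝ => (0:ℝ)) atTop (nhds 0) := tendsto_const_nhds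
    have h1 : ∀ᶠ t in atTop, (0:ℝ) ≤ V t i := by
      filter_upwards [eventually_ge_atTop (0:ℝ)] with t ht
      exact part_a t ht i
    have h2 : ∀ᶠ t in atTop, V t i ≤ S t := by
      filter_upwards [eventually_ge_atTop (0:ℝ)] with t ht
      exact Finset.single_le_sum (fun j _ => part_a t ht j) (Finset.mem_univ i)
    have : Tendsto (fun t => V t i) atTop (nhds 0) :=
      tendsto_of_tendsto_of_tendsto_of_le_of_le' hzero hStend h1 h2
    simpa using this
  exact ⟨part_a, part_b, part_c⟩
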